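/- Let G be a simple graph on a vertex type V, let u and v be distinct vertices, let f be a natural number, and let B ⊆ V be a finite set with |B| ≤ f, u ∉ B, and v ∉ B. If there exist 2f+1 pairwise internally vertex-disjoint u–v paths in G, then the induced subgraph of G on V \ B contains at least f+1 pairwise internally vertex-disjoint paths between u and v. -/

import Mathlib

/-- A family of `u`–`v` walks is pairwise internally vertex-disjoint if any two
distinct members share no vertices other than the endpoints `u` and `v`. -/
def PairwiseInternallyDisjoint {V : Type*} {G : SimpleGraph V} {u v : V} {ι : Type*}
    (P : ι → G.Walk u v) : Prop :=
  ∀ i j, i ≠ j → ∀ x, x ∈ (P i).support → x ∈ (P j).support → x = u ∨ x = v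



def liftWalk {V : Type*} {G : SimpleGraph V} {s : Set V} :
    ∀ {a b : V} (w : G.Walk a b) (hw : ∀ x ∈ w.support, x ∈ s),
      (G.induce s).Walk ⟨a, hw a w.start_mem_support⟩ ⟨b, hw b w.end_mem_support⟩
  | _, _, SimpleGraph.Walk.nil, _ => SimpleGraph.Walk.nil
  | _, _, SimpleGraph.Walk.cons h p, hw =>
      SimpleGraph.Walk.cons (by exact h)
        (liftWalk p (fun x hx => hw x (by simp [hx])))

theorem liftWalk_support {V : Type*} {G : SimpleGraph V} {s : Set V} :
    ∀ {a b : V} (w : G.Walk a b) (hw : ∀ x ∈ w.support, x ∈ s),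
      (liftWalk w hw).support.map Subtype.val = w.support
  | _, _, SimpleGraph.Walk.nil, _ => by simp [liftWalk]
  | _, _, SimpleGraph.Walk.cons h p, hw => by
      simp only [liftWalk]
      exact congrArg (List.cons _) (liftWalk_support p _)

theorem liftWalk_mem_support {V : Type*} {G : SimpleGraph V} {s : Set V}
    {a b : V} (w : G.Walk a b) (hw : ∀ x ∈ w.support, x ∈ s) (x : s) :
    x ∈ (liftWalk w hw).support ↔ (x : V) ∈ w.support := by
  constructor
  · intro hx
    have : (x : V) ∈ (liftWalk w hw).support.map Subtype.val :=
      List.mem_map.mpr ⟨x, hx, rfl⟩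
    rwa [liftWalk_support] at this
  · intro hx
    rw [← liftWalk_support w hw] at hx
    obtain ⟨y, hy, hh⟩ := List.mem_map.mp hx
    rwa [show x = y from Subtype.ext hh.symm]

theorem liftWalk_isPath {V : Type*} {G : SimpleGraph V} {s : Set V}
    {a b : V} (w : G.Walk a b) (hw : ∀ x ∈ w.support, x ∈ s) (h : w.IsPath) :
    (liftWalk w hw).IsPath := by
  rw [SimpleGraph.Walk.isPath_def] at h ⊢
  have := (liftWalk_support w hw) ▸ h
  exact (List.nodup_map_iff Subtype.val_injective).mp this

/-- If there are `2f+1` pairwise internally vertex-disjoint `u`–`v` paths in `G`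
and `B` is a set of at most `f` vertices avoiding `u` and `v`, then the subgraph
induced on `V \ B` contains at least `f+1` pairwise internally vertex-disjoint
paths between `u` and `v`. -/
theorem disjoint_paths_avoiding_byzantine {V : Type*} (G : SimpleGraph V)
    (u v : V) (huv : u ≠ v) (f : ℕ) (B : Finset V) (hB : B.card ≤ f)
    (huB : u ∉ B) (hvB : v ∉ B)
    (h : ∃ P : Fin (2 * f + 1) → G.Walk u v,
      (∀ i, (P i).IsPath) ∧ PairwiseInternallyDisjoint P) :
    ∃ Q : Fin (f + 1) →
        (SimpleGraph.induce ((↑B : Set V)ᶜ) G).Walk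
          ⟨u, by simpa using huB⟩ ⟨v, by simpa using hvB⟩,
      (∀ i, (Q i).IsPath) ∧ PairwiseInternallyDisjoint Q := by
  classical
  obtain ⟨P, hpath, hdisj⟩ := h
  set S : Finset (Fin (2 * f + 1)) :=
    Finset.univ.filter (fun i => ∃ x ∈ B, x ∈ (P i).support) with hS
  -- each bad index gets a distinct vertex of B
  have hScard : S.card ≤ f := by
    have : S.card ≤ B.card := by
      apply Finset.card_le_card_of_injOn
        (fun i => if h : ∃ x ∈ B, x ∈ (P i).support then h.choose else u)
      · intro i hi
        rw [hS, Finset.coe_filter, Set.mem_setOf_eq] at hi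
        simp only [dif_pos hi.2]
        exact hi.2.choose_spec.1
      · intro i hi j hj hij
        rw [hS, Finset.coe_filter, Set.mem_setOf_eq] at hi hj
        simp only at hij
        rw [dif_pos hi.2, dif_pos hj.2] at hij
        by_contra hne
        obtain ⟨hxB, hxi⟩ := hi.2.choose_spec
        obtain ⟨hyB, hyj⟩ := hj.2.choose_spec
        rw [hij] at hxi hxB
        rcases hdisj i j hne _ hxi hyj with h1 | h1 <;> rw [h1] at hxB
        · exact huB hxB
        · exact hvB hxB
    omega
  have hTcard : f + 1 ≤ Sᶜ.card := by
    have := Finset.card_compl S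
    simp only [Fintype.card_fin] at this
    omega
  obtain ⟨T, hTsub, hT⟩ := Finset.exists_subset_card_eq hTcard
  let e := T.orderIsoOfFin hT
  have hgood : ∀ i : Fin (f + 1), ∀ x ∈ (P (e i : Fin (2 * f + 1))).support,
      x ∈ ((↑B : Set V)ᶜ) := by
    intro i x hx hxB
    have : (e i : Fin (2 * f + 1)) ∈ Sᶜ := hTsub (e i).2
    rw [Finset.mem_compl, hS, Finset.mem_filter] at this
    exact this ⟨Finset.mem_univ _, x, hxB, hx⟩
  refine ⟨fun i => liftWalk (P (e i : Fin (2 * f + 1))) (hgood i),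
    fun i => liftWalk_isPath _ _ (hpath _), ?_⟩
  intro i j hij x hxi hxj
  rw [liftWalk_mem_support] at hxi hxj
  have hne : (e i : Fin (2 * f + 1)) ≠ (e j : Fin (2 * f + 1)) := by
    intro hEq
    exact hij (e.injective (Subtype.ext hEq))
  rcases hdisj _ _ hne _ hxi hxj with h1 | h1
  · exact Or.inl (Subtype.ext h1)
  · exact Or.inr (Subtype.ext h1)
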